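/- Let V be a vector space over a field K and let ℒ be a finite collection of linear subspaces of V that is closed under intersection and sum and is distributive: for all A, B, C ∈ ℒ one has (A + B) ∩ C = (A ∩ C) + (B ∩ C). Then there exists a basis of V such that every member of ℒ is the span of a subset of that basis (i.e. every member of ℒ is a coordinate subspace for this basis). -/

import Mathlib

/-- A finite distributive lattice of subspaces of a vector space `V` (closed under
intersection `⊓` and sum `⊔`, and satisfying `(A + B) ∩ C = (A ∩ C) + (B ∩ C)`) can be
simultaneously coordinatized: there is a basis of `V` such that every member of the
lattice is the span of a subset of the basis. -/
theorem exists_basis_of_finite_distributive_lattice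
    {K : Type u} {V : Type v} [Field K] [AddCommGroup V] [Module K V]
    (L : Set (Submodule K V)) (hfin : L.Finite)
    (hinf : ∀ A ∈ L, ∀ B ∈ L, A ⊓ B ∈ L)
    (hsup : ∀ A ∈ L, ∀ B ∈ L, A ⊔ B ∈ L)
    (hdist : ∀ A ∈ L, ∀ B ∈ L, ∀ C ∈ L, (A ⊔ B) ⊓ C = (A ⊓ C) ⊔ (B ⊓ C)) :
    ∃ (ι : Type v) (b : Module.Basis ι K V),
      ∀ A ∈ L, ∃ J : Set ι, A = Submodule.span K (b '' J) := by
  classical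
  -- Enlarge `L` to contain `⊥` and `⊤`.
  set L' : Set (Submodule K V) := insert ⊥ (insert ⊤ L) with hL'def
  have hLsub : L ⊆ L' := fun A hA => Or.inr (Or.inr hA)
  have hbot : (⊥ : Submodule K V) ∈ L' := Or.inl rfl
  have htopmem : (⊤ : Submodule K V) ∈ L' := Or.inr (Or.inl rfl)
  have hfin' : L'.Finite := (hfin.insert ⊤).insert ⊥
  have hmem : ∀ {A : Submodule K V}, A ∈ L' → A = ⊥ ∨ A = ⊤ ∨ A ∈ L := fun h => h
  have hinf' : ∀ A ∈ L', ∀ B ∈ L', A ⊓ B ∈ L' := by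
    intro A hA B hB
    rcases hmem hA with rfl | rfl | hA <;> rcases hmem hB with rfl | rfl | hB <;>
      first
        | simpa using hbot
        | simpa using htopmem
        | simpa using hLsub hA
        | simpa using hLsub hB
        | exact hLsub (hinf _ hA _ hB)
  have hsup' : ∀ A ∈ L', ∀ B ∈ L', A ⊔ B ∈ L' := by
    intro A hA B hB
    rcases hmem hA with rfl | rfl | hA <;> rcases hmem hB with rfl | rfl | hB <;>
      first
        | simpa using hbot
        | simpa using htopmem
        | simpa using hLsub hA
        | simpa using hLsub hB
        | exact hLsub (hsup _ hA _ hB)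
  have hdist' : ∀ A ∈ L', ∀ B ∈ L', ∀ C ∈ L', (A ⊔ B) ⊓ C = (A ⊓ C) ⊔ (B ⊓ C) := by
    intro A hA B hB C hC
    rcases hmem hA with rfl | rfl | hA <;> rcases hmem hB with rfl | rfl | hB <;>
      rcases hmem hC with rfl | rfl | hC <;>
      first
        | exact hdist _ hA _ hB _ hC
        | simp
        | simp [inf_comm]
        | simp [sup_comm]
        | simp [inf_comm, sup_comm]
  -- the "lower part" of a subspace: the sup of all members of `L'` strictly below it
  set below : Submodule K V → Submodule K V :=
    fun A => (hfin'.toFinset.filter (fun B => B < A)).sup id with hbelowdef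
  have below_le : ∀ A, below A ≤ A := by
    intro A
    apply Finset.sup_le
    intro B hB
    exact (Finset.mem_filter.mp hB).2.le
  have le_below : ∀ {A B : Submodule K V}, B ∈ L' → B < A → B ≤ below A := by
    intro A B hB hBA
    exact Finset.le_sup (f := id)
      (Finset.mem_filter.mpr ⟨hfin'.mem_toFinset.mpr hB, hBA⟩)
  -- finite sups of members of `L'` stay in `L'`, and distribute over `⊓`
  have sup_mem : ∀ t : Finset (Submodule K V), (∀ B ∈ t, B ∈ L') → t.sup id ∈ L' := by
    intro t
    induction t using Finset.induction with
    | empty => intro _; simpa using hbot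
    | insert _ _ hx ih =>
      intro ht
      rw [Finset.sup_insert]
      exact hsup' _ (ht _ (Finset.mem_insert_self _ _))
        _ (ih fun B hB => ht _ (Finset.mem_insert_of_mem hB))
  have inf_sup : ∀ (t : Finset (Submodule K V)), (∀ B ∈ t, B ∈ L') → ∀ A ∈ L',
      A ⊓ t.sup id = t.sup (fun B => A ⊓ B) := by
    intro t
    induction t using Finset.induction with
    | empty => intro _ A _; simp
    | @insert C t hx ih =>
      intro ht A hA
      have hC : C ∈ L' := ht _ (Finset.mem_insert_self _ _)
      have ht' : ∀ B ∈ t, B ∈ L' := fun B hB => ht _ (Finset.mem_insert_of_mem hB)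
      simp only [Finset.sup_insert, id_eq]
      have hd := hdist' C hC (t.sup id) (sup_mem t ht') A hA
      rw [inf_comm A, hd, inf_comm C A, inf_comm (t.sup id) A, ih ht' A hA]
  -- choose a complement of `below A` inside `A`
  have exW : ∀ A : Submodule K V,
      ∃ Wa : Submodule K V, Wa ≤ A ∧ below A ⊓ Wa = ⊥ ∧ below A ⊔ Wa = A := by
    intro A
    obtain ⟨q, hq⟩ := Submodule.exists_isCompl ((below A).comap A.subtype)
    have hbe : Submodule.map A.subtype ((below A).comap A.subtype) = below A := by
      rw [Submodule.map_comap_subtype, inf_eq_right.mpr (below_le A)]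
    refine ⟨q.map A.subtype, Submodule.map_subtype_le A q, ?_, ?_⟩
    · rw [← hbe, ← Submodule.map_inf _ (Submodule.injective_subtype A), hq.inf_eq_bot,
        Submodule.map_bot]
    · rw [← hbe, ← Submodule.map_sup, hq.sup_eq_top, Submodule.map_top,
        Submodule.range_subtype]
  choose W Wle Winf Wsup using exW
  -- key cancellation: a finite sum of elements of the `W B`'s can only vanish trivially
  have core : ∀ (s : Finset (Submodule K V)), (∀ B ∈ s, B ∈ L') → ∀ w : Submodule K V → V,
      (∀ B, w B ∈ W B) → (∑ B ∈ s, w B) = 0 → ∀ B ∈ s, w B = 0 := by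
    intro s
    induction s using Finset.strongInduction with
    | _ s ih =>
      intro hs w hw hsum B hB
      obtain ⟨A, hA, hAmax⟩ : ∃ A ∈ s, ∀ C ∈ s, ¬ A < C :=
        let ⟨A, hA⟩ := Finset.exists_maximal ⟨B, hB⟩
        ⟨A, hA.1, fun C hC h => lt_irrefl A (h.trans_le (hA.2 hC h.le))⟩
      have hwA : w A = 0 := by
        have h1 : w A ∈ (s.erase A).sup id := by
          have heq : w A = -∑ C ∈ s.erase A, w C := by
            have h := Finset.add_sum_erase s w hA
            rw [hsum] at h
            exact eq_neg_of_add_eq_zero_left h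
          rw [heq]
          exact Submodule.neg_mem _ (Submodule.sum_mem _ fun C hC =>
            (le_trans (Wle C) (Finset.le_sup (f := id) hC)) (hw C))
        have h2 : w A ∈ A ⊓ (s.erase A).sup id :=
          Submodule.mem_inf.mpr ⟨Wle A (hw A), h1⟩
        rw [inf_sup _ (fun C hC => hs C (Finset.mem_of_mem_erase hC)) A (hs A hA)] at h2
        have h3 : (s.erase A).sup (fun C => A ⊓ C) ≤ below A := by
          apply Finset.sup_le
          intro C hC
          have hC' : C ∈ L' := hs C (Finset.mem_of_mem_erase hC)
          have hlt : A ⊓ C < A := by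
            refine lt_of_le_of_ne inf_le_left ?_
            intro heq
            have hAC : A ≤ C := heq ▸ inf_le_right
            exact hAmax C (Finset.mem_of_mem_erase hC)
              (lt_of_le_of_ne hAC fun h => (Finset.ne_of_mem_erase hC) h.symm)
          exact le_below (hinf' A (hs A hA) C hC') hlt
        have h4 : w A ∈ below A ⊓ W A := Submodule.mem_inf.mpr ⟨h3 h2, hw A⟩
        rw [Winf A] at h4
        simpa using h4
      by_cases hBA : B = A
      · rw [hBA]; exact hwA
      · have hsum' : ∑ C ∈ s.erase A, w C = 0 := by
          have h := Finset.add_sum_erase s w hA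
          rw [hsum, hwA, zero_add] at h
          exact h
        exact ih (s.erase A) (Finset.erase_ssubset hA)
          (fun C hC => hs C (Finset.mem_of_mem_erase hC)) w hw hsum' B
          (Finset.mem_erase.mpr ⟨hBA, hB⟩)
  -- every member of `L'` is contained in the sup of the `W B` for `B ≤ A`
  have le_sup_W : ∀ A ∈ L', A ≤ ⨆ i : ↥L', ⨆ (_ : (i : Submodule K V) ≤ A), W i := by
    have main : ∀ n : ℕ, ∀ A ∈ L', (hfin'.toFinset.filter (fun B => B < A)).card ≤ n →
        A ≤ ⨆ i : ↥L', ⨆ (_ : (i : Submodule K V) ≤ A), W i := by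
      intro n
      induction n using Nat.strong_induction_on with
      | _ n ih =>
        intro A hA hcard
        conv_lhs => rw [← Wsup A]
        apply sup_le
        · apply Finset.sup_le
          intro C hC
          obtain ⟨hC1, hC2⟩ := Finset.mem_filter.mp hC
          have hCL : C ∈ L' := hfin'.mem_toFinset.mp hC1
          have hsub : hfin'.toFinset.filter (fun B => B < C) ⊆
              hfin'.toFinset.filter (fun B => B < A) := by
            intro B hB
            obtain ⟨hB1, hB2⟩ := Finset.mem_filter.mp hB
            exact Finset.mem_filter.mpr ⟨hB1, hB2.trans hC2⟩
          have hss : hfin'.toFinset.filter (fun B => B < C) ⊂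
              hfin'.toFinset.filter (fun B => B < A) :=
            (Finset.ssubset_iff_of_subset hsub).mpr
              ⟨C, hC, fun h => lt_irrefl C (Finset.mem_filter.mp h).2⟩
          have hlt : (hfin'.toFinset.filter (fun B => B < C)).card < n :=
            lt_of_lt_of_le (Finset.card_lt_card hss) hcard
          refine le_trans (ih _ hlt C hCL le_rfl) ?_
          exact iSup_mono fun i => iSup_le fun h =>
            le_iSup_of_le (h.trans hC2.le) le_rfl
        · exact le_iSup_of_le ⟨A, hA⟩ (le_iSup_of_le le_rfl le_rfl)
    intro A hA
    exact main _ A hA le_rfl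
  -- the `W B` span `V`
  have htop : ⨆ i : ↥L', W (i : Submodule K V) = ⊤ := by
    refine top_unique (le_trans (le_sup_W ⊤ htopmem) ?_)
    exact iSup_mono fun i => iSup_le fun _ => le_rfl
  -- the `W B` are independent
  have hind : iSupIndep (fun i : ↥L' => W (i : Submodule K V)) := by
    rw [iSupIndep_iff_dfinsupp_lsum_injective, ← LinearMap.ker_eq_bot,
      LinearMap.ker_eq_bot']
    intro f hf
    set s : Finset (Submodule K V) := f.support.image Subtype.val
      with hsdef
    set w : Submodule K V → V :=
      fun B => if h : B ∈ L' then ((f ⟨B, h⟩ : ↥(W B)) : V) else 0 with hwdef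
    have hw : ∀ B, w B ∈ W B := by
      intro B
      by_cases h : B ∈ L' <;> simp [hwdef, h]
    have hval : ∑ B ∈ s, w B = 0 := by
      rw [hsdef, Finset.sum_image (fun i _ j _ h => Subtype.ext h)]
      have : ∀ i ∈ f.support, w (i : Submodule K V) = ((f i : ↥(W (i:Submodule K V))) : V) := by
        intro i _
        simp only [hwdef, dif_pos i.2]
      rw [Finset.sum_congr rfl this]
      have hlsum : (DFinsupp.lsum ℕ (fun i : ↥L' => (W (i : Submodule K V)).subtype)) f
          = ∑ i ∈ f.support, ((f i : ↥(W (i:Submodule K V))) : V) := by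
        simp [DFinsupp.lsum_apply_apply, DFinsupp.sumAddHom_apply, DFinsupp.sum]
      rw [← hlsum, hf]
    have hz := core s (by
      rintro B hB
      rw [hsdef] at hB
      obtain ⟨i, _, rfl⟩ := Finset.mem_image.mp hB
      exact i.2) w hw hval
    ext i
    by_cases hi : i ∈ f.support
    · have := hz (i : Submodule K V) (Finset.mem_image_of_mem _ hi)
      rw [hwdef] at this
      simp only [dif_pos i.2] at this
      have : f i = 0 := by
        apply Subtype.ext
        simpa using this
      simp [this]
    · simp [DFinsupp.notMem_support_iff.mp hi]
  have hint : DirectSum.IsInternal (fun i : ↥L' => W (i : Submodule K V)) :=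
    DirectSum.isInternal_submodule_of_iSupIndep_of_iSup_eq_top hind htop
  -- assemble the basis
  let v : ∀ i : ↥L', Module.Basis (Module.Basis.ofVectorSpaceIndex K ↥(W (i : Submodule K V))) K
      ↥(W (i : Submodule K V)) := fun i => Module.Basis.ofVectorSpace K _
  refine ⟨Σ i : ↥L', Module.Basis.ofVectorSpaceIndex K ↥(W (i : Submodule K V)),
    hint.collectedBasis v, ?_⟩
  intro A hA
  have hA' : A ∈ L' := hLsub hA
  refine ⟨{σ | (σ.1 : Submodule K V) ≤ A}, le_antisymm ?_ ?_⟩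
  · refine le_trans (le_sup_W A hA') (iSup_le fun i => iSup_le fun hi => ?_)
    have hWi : W (i : Submodule K V) = Submodule.span K
        ((W (i : Submodule K V)).subtype '' Set.range (v i)) := by
      rw [← Submodule.map_span, (v i).span_eq, Submodule.map_top, Submodule.range_subtype]
    rw [hWi]
    apply Submodule.span_le.mpr
    rintro x ⟨y, ⟨j, rfl⟩, rfl⟩
    apply Submodule.subset_span
    refine ⟨⟨i, j⟩, hi, ?_⟩
    rw [hint.collectedBasis_coe]
    rfl
  · rw [Submodule.span_le]
    rintro x ⟨σ, hσ, rfl⟩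
    exact hσ (Wle _ (hint.collectedBasis_mem v σ))
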